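/- Let N ≥ 1 be an integer, α, β : Z/NZ → C functions, and t, u ∈ C. Define S^{t,u}_{α,β}(τ) = Σ_{m≥1} Σ_{n≥1} α(m) β(n) m^t n^u e^{2πiτmn/N} for τ in the upper half-plane. Then for s ∈ C with Re(s) sufficiently large, y ↦ S^{t,u}_{α,β}(iy) y^{s-1} is integrable on (0,∞) and ∫_0^∞ S^{t,u}_{α,β}(iy) y^{s-1} dy = (2π/N)^{-s} Γ(s) L(α, s-t) L(β, s-u), where L(α,s) = Σ_{m≥1} α(m) m^{-s}. -/

import Mathlib

set_option autoImplicit false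

open Complex MeasureTheory Real
open scoped ENNReal NNReal

/-- The double series `S^{t,u}_{α,β}(τ) = Σ_{m,n≥1} α(m)β(n) m^t n^u e^{2πiτmn/N}`. -/
noncomputable def doubleEisSeries (N : ℕ) (α β : ZMod N → ℂ) (t u : ℂ) (τ : ℂ) : ℂ :=
  ∑' m : ℕ+, ∑' n : ℕ+, α ((m : ℕ) : ZMod N) * β ((n : ℕ) : ZMod N) *
    ((m : ℕ) : ℂ) ^ t * ((n : ℕ) : ℂ) ^ u *
    Complex.exp (2 * π * I * τ * ((m : ℕ) : ℂ) * ((n : ℕ) : ℂ) / N)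

/-- The Dirichlet series `L(α,s) = Σ_{m≥1} α(m) m^{-s}` of an `N`-periodic function. -/
noncomputable def periodicLSeries (N : ℕ) (α : ZMod N → ℂ) (s : ℂ) : ℂ :=
  ∑' m : ℕ+, α ((m : ℕ) : ZMod N) * ((m : ℕ) : ℂ) ^ (-s)

private lemma aux_summable_rpow_exp (x : ℝ) {c : ℝ} (hc : 0 < c) :
    Summable fun m : ℕ+ => ((m : ℕ) : ℝ) ^ x * rexp (-c * (m : ℕ)) := by
  have hr : ‖rexp (-c)‖ < 1 := by
    rw [Real.norm_of_nonneg (Real.exp_pos _).le]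
    exact Real.exp_lt_one_iff.mpr (by linarith)
  have h1 : Summable fun m : ℕ => ((m : ℝ) ^ (⌈x⌉₊ : ℕ)) * rexp (-c) ^ m :=
    summable_pow_mul_geometric_of_norm_lt_one _ hr
  have h2 := h1.comp_injective PNat.coe_injective
  refine Summable.of_nonneg_of_le (fun m => by positivity) (fun m => ?_) h2
  simp only [Function.comp_apply]
  have h1m : (1 : ℝ) ≤ ((m : ℕ) : ℝ) := by exact_mod_cast m.one_le
  rw [show -c * ((m : ℕ) : ℝ) = ((m : ℕ) : ℝ) * (-c) by ring, Real.exp_nat_mul]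
  refine mul_le_mul ?_ le_rfl (by positivity) (by positivity)
  calc ((m : ℕ) : ℝ) ^ x ≤ ((m : ℕ) : ℝ) ^ ((⌈x⌉₊ : ℕ) : ℝ) :=
        Real.rpow_le_rpow_of_exponent_le h1m (Nat.le_ceil x)
    _ = ((m : ℕ) : ℝ) ^ (⌈x⌉₊ : ℕ) := Real.rpow_natCast _ _

private lemma aux_summable_rpow {x : ℝ} (hx : x < -1) :
    Summable fun m : ℕ+ => ((m : ℕ) : ℝ) ^ x :=
  (Real.summable_nat_rpow.mpr hx).comp_injective PNat.coe_injective

set_option maxHeartbeats 2000000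

/-- For `Re s` sufficiently large, `y ↦ S^{t,u}_{α,β}(iy) y^{s-1}` is integrable on `(0,∞)` and
`∫_0^∞ S^{t,u}_{α,β}(iy) y^{s-1} dy = (2π/N)^{-s} Γ(s) L(α,s-t) L(β,s-u)`. -/
theorem mellin_doubleEisSeries (N : ℕ) (hN : 1 ≤ N) (α β : ZMod N → ℂ) (t u : ℂ) :
    ∃ A : ℝ, ∀ s : ℂ, A < s.re →
      IntegrableOn (fun y : ℝ =>
          doubleEisSeries N α β t u (I * (y : ℂ)) * (y : ℂ) ^ (s - 1)) (Set.Ioi 0) ∧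
      ∫ y in Set.Ioi (0 : ℝ),
          doubleEisSeries N α β t u (I * (y : ℂ)) * (y : ℂ) ^ (s - 1) =
        ((2 * π / N : ℂ)) ^ (-s) * Complex.Gamma s *
          periodicLSeries N α (s - t) * periodicLSeries N β (s - u) := by
  haveI : NeZero N := ⟨by omega⟩
  obtain ⟨Cα, hCα⟩ := Finite.exists_le fun m : ZMod N => ‖α m‖
  obtain ⟨Cβ, hCβ⟩ := Finite.exists_le fun m : ZMod N => ‖β m‖
  have hCα0 : 0 ≤ Cα := le_trans (norm_nonneg _) (hCα 0)
  have hCβ0 : 0 ≤ Cβ := le_trans (norm_nonneg _) (hCβ 0)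
  have hN0 : (0 : ℝ) < N := by exact_mod_cast Nat.lt_of_lt_of_le Nat.zero_lt_one hN
  set a : ℕ+ × ℕ+ → ℂ := fun i =>
    α ((i.1 : ℕ) : ZMod N) * β ((i.2 : ℕ) : ZMod N) * ((i.1 : ℕ) : ℂ) ^ t * ((i.2 : ℕ) : ℂ) ^ u
    with ha_def
  set p : ℕ+ × ℕ+ → ℝ := fun i => 2 * π / N * (i.1 : ℕ) * (i.2 : ℕ) with hp_def
  have hppos : ∀ i, 0 < p i := by
    intro i
    have h1 : (0 : ℝ) < (i.1 : ℕ) := by exact_mod_cast i.1.pos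
    have h2 : (0 : ℝ) < (i.2 : ℕ) := by exact_mod_cast i.2.pos
    have := Real.pi_pos
    rw [hp_def]
    positivity
  have hanorm : ∀ i : ℕ+ × ℕ+,
      ‖a i‖ = ‖α ((i.1 : ℕ) : ZMod N)‖ * ‖β ((i.2 : ℕ) : ZMod N)‖ *
        ((i.1 : ℕ) : ℝ) ^ t.re * ((i.2 : ℕ) : ℝ) ^ u.re := by
    intro i
    rw [ha_def]
    simp only [norm_mul, Complex.norm_natCast_cpow_of_pos i.1.pos,
      Complex.norm_natCast_cpow_of_pos i.2.pos]
  have hanorm_le : ∀ i : ℕ+ × ℕ+,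
      ‖a i‖ ≤ Cα * Cβ * (((i.1 : ℕ) : ℝ) ^ t.re * ((i.2 : ℕ) : ℝ) ^ u.re) := by
    intro i
    rw [hanorm i]
    have h1 : (0 : ℝ) ≤ ((i.1 : ℕ) : ℝ) ^ t.re := by positivity
    have h2 : (0 : ℝ) ≤ ((i.2 : ℕ) : ℝ) ^ u.re := by positivity
    calc ‖α ((i.1 : ℕ) : ZMod N)‖ * ‖β ((i.2 : ℕ) : ZMod N)‖ *
        ((i.1 : ℕ) : ℝ) ^ t.re * ((i.2 : ℕ) : ℝ) ^ u.re
        ≤ Cα * Cβ * ((i.1 : ℕ) : ℝ) ^ t.re * ((i.2 : ℕ) : ℝ) ^ u.re := by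
          gcongr <;> [exact hCα _; exact hCβ _]
      _ = Cα * Cβ * (((i.1 : ℕ) : ℝ) ^ t.re * ((i.2 : ℕ) : ℝ) ^ u.re) := by ring
  -- key summability (S1): for any `c > 0`
  have S1 : ∀ c : ℝ, 0 < c → Summable fun i : ℕ+ × ℕ+ => ‖a i‖ * rexp (-p i * c) := by
    intro c hc
    have hc' : 0 < 2 * π / N * c := by have := Real.pi_pos; positivity
    set c' : ℝ := 2 * π / N * c with hc'_def
    have hsm := aux_summable_rpow_exp t.re hc'
    have hsn := aux_summable_rpow_exp u.re hc'
    have hprod := hsm.mul_of_nonneg hsn (fun m => by positivity) (fun n => by positivity)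
    refine Summable.of_nonneg_of_le (fun i => by positivity) (fun i => ?_)
      (hprod.mul_left (Cα * Cβ * rexp c'))
    have hm1 : (1 : ℝ) ≤ ((i.1 : ℕ) : ℝ) := by exact_mod_cast i.1.one_le
    have hn1 : (1 : ℝ) ≤ ((i.2 : ℕ) : ℝ) := by exact_mod_cast i.2.one_le
    have hkey : -p i * c ≤ c' + (-c' * (i.1 : ℕ) + -c' * (i.2 : ℕ)) := by
      rw [hp_def, hc'_def]
      have h2piN : (0 : ℝ) ≤ 2 * π / N := by have := Real.pi_pos; positivity
      nlinarith [mul_le_mul_of_nonneg_left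
        (show ((i.1 : ℕ) : ℝ) + ((i.2 : ℕ) : ℝ) - 1 ≤ ((i.1 : ℕ) : ℝ) * ((i.2 : ℕ) : ℝ) by
          nlinarith) (mul_nonneg h2piN hc.le)]
    calc ‖a i‖ * rexp (-p i * c)
        ≤ (Cα * Cβ * (((i.1 : ℕ) : ℝ) ^ t.re * ((i.2 : ℕ) : ℝ) ^ u.re)) *
          rexp (c' + (-c' * (i.1 : ℕ) + -c' * (i.2 : ℕ))) := by
          refine mul_le_mul (hanorm_le i) (Real.exp_le_exp.mpr hkey) (Real.exp_pos _).le ?_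
          positivity
      _ = Cα * Cβ * rexp c' * (((i.1 : ℕ) : ℝ) ^ t.re * rexp (-c' * (i.1 : ℕ)) *
            (((i.2 : ℕ) : ℝ) ^ u.re * rexp (-c' * (i.2 : ℕ)))) := by
          rw [Real.exp_add, Real.exp_add]; ring
  refine ⟨max 0 (max t.re u.re) + 2, fun s hs => ?_⟩
  have hs0 : 0 < s.re := by
    have := le_max_left 0 (max t.re u.re); linarith
  have hst : t.re - s.re < -1 := by
    have h1 : t.re ≤ max t.re u.re := le_max_left _ _
    have h2 : max t.re u.re ≤ max 0 (max t.re u.re) := le_max_right _ _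
    linarith
  have hsu : u.re - s.re < -1 := by
    have h1 : u.re ≤ max t.re u.re := le_max_right _ _
    have h2 : max t.re u.re ≤ max 0 (max t.re u.re) := le_max_right _ _
    linarith
  set F : ℝ → ℂ := fun y => doubleEisSeries N α β t u (I * (y : ℂ)) with hF_def
  -- exponential identity
  have hexp : ∀ (y : ℝ) (m n : ℕ+),
      Complex.exp (2 * π * I * (I * (y : ℂ)) * ((m : ℕ) : ℂ) * ((n : ℕ) : ℂ) / N) =
        ((rexp (-(2 * π / N * (m : ℕ) * (n : ℕ)) * y) : ℝ) : ℂ) := by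
    intro y m n
    rw [Complex.ofReal_exp]
    congr 1
    push_cast
    rw [show (2 * π * I * (I * (y : ℂ)) * ((m : ℕ) : ℂ) * ((n : ℕ) : ℂ) / (N : ℂ)) =
      (I * I) * (2 * π * (y : ℂ) * ((m : ℕ) : ℂ) * ((n : ℕ) : ℂ) / (N : ℂ)) by ring,
      Complex.I_mul_I]
    ring
  -- pointwise summability and HasSum towards F
  have hsumy : ∀ y : ℝ, 0 < y →
      Summable fun i : ℕ+ × ℕ+ => a i * (rexp (-p i * y) : ℝ) := by
    intro y hy
    refine Summable.of_norm ?_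
    refine (S1 y hy).congr fun i => ?_
    conv_rhs => rw [norm_mul, Complex.norm_real, Real.norm_of_nonneg (Real.exp_pos _).le]
  have hF : ∀ y ∈ Set.Ioi (0 : ℝ),
      HasSum (fun i : ℕ+ × ℕ+ => a i * (rexp (-p i * y) : ℝ)) (F y) := by
    intro y hy
    have hsum := hsumy y hy
    have h1 := hsum.hasSum
    have h2 : (∑' i : ℕ+ × ℕ+, a i * (rexp (-p i * y) : ℝ)) = F y := by
      rw [Summable.tsum_prod' hsum fun m => hsum.prod_factor m]
      rw [hF_def]
      unfold doubleEisSeries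
      congr 1; ext m; congr 1; ext n
      rw [hexp y m n, ha_def, hp_def]
    rwa [h2] at h1
  -- summability for the Mellin transform
  have h_sum : Summable fun i : ℕ+ × ℕ+ => ‖a i‖ / p i ^ s.re := by
    have hc : (0 : ℝ) < 2 * π / N := by have := Real.pi_pos; positivity
    have hsm := aux_summable_rpow hst
    have hsn := aux_summable_rpow hsu
    have hprod := hsm.mul_of_nonneg hsn (fun m => by positivity) (fun n => by positivity)
    refine Summable.of_nonneg_of_le (fun i => by positivity) (fun i => ?_)
      (hprod.mul_left (Cα * Cβ / (2 * π / N) ^ s.re))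
    have hm0 : (0 : ℝ) < ((i.1 : ℕ) : ℝ) := by exact_mod_cast i.1.pos
    have hn0 : (0 : ℝ) < ((i.2 : ℕ) : ℝ) := by exact_mod_cast i.2.pos
    have hpow : p i ^ s.re = (2 * π / N) ^ s.re * ((i.1 : ℕ) : ℝ) ^ s.re *
        ((i.2 : ℕ) : ℝ) ^ s.re := by
      rw [hp_def]
      rw [Real.mul_rpow (by positivity) hn0.le, Real.mul_rpow hc.le hm0.le]
    rw [hpow, div_eq_mul_inv]
    calc ‖a i‖ * ((2 * π / N) ^ s.re * ((i.1 : ℕ) : ℝ) ^ s.re * ((i.2 : ℕ) : ℝ) ^ s.re)⁻¹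
        ≤ (Cα * Cβ * (((i.1 : ℕ) : ℝ) ^ t.re * ((i.2 : ℕ) : ℝ) ^ u.re)) *
          ((2 * π / N) ^ s.re * ((i.1 : ℕ) : ℝ) ^ s.re * ((i.2 : ℕ) : ℝ) ^ s.re)⁻¹ := by
          gcongr
          exact hanorm_le i
      _ = Cα * Cβ / (2 * π / N) ^ s.re *
          (((i.1 : ℕ) : ℝ) ^ (t.re - s.re) * ((i.2 : ℕ) : ℝ) ^ (u.re - s.re)) := by
          have hA : (2 * π / N : ℝ) ^ s.re ≠ 0 := (Real.rpow_pos_of_pos hc _).ne'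
          have hM : ((i.1 : ℕ) : ℝ) ^ s.re ≠ 0 := (Real.rpow_pos_of_pos hm0 _).ne'
          have hK : ((i.2 : ℕ) : ℝ) ^ s.re ≠ 0 := (Real.rpow_pos_of_pos hn0 _).ne'
          rw [Real.rpow_sub hm0, Real.rpow_sub hn0]
          field_simp
  -- apply the Mellin machine
  have hp' : ∀ i, a i = 0 ∨ 0 < p i := fun i => Or.inr (hppos i)
  have HS := hasSum_mellin hp' hs0 hF h_sum
  -- value of the sum: product of L-series
  have hLα : Summable fun m : ℕ+ => α ((m : ℕ) : ZMod N) * ((m : ℕ) : ℂ) ^ (-(s - t)) := by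
    refine Summable.of_norm ?_
    refine Summable.of_nonneg_of_le (fun m => by positivity) (fun m => ?_)
      ((aux_summable_rpow hst).mul_left Cα)
    rw [norm_mul, Complex.norm_natCast_cpow_of_pos m.pos]
    rw [show (-(s - t)).re = t.re - s.re by rw [neg_re, sub_re]; ring]
    exact mul_le_mul_of_nonneg_right (hCα _) (by positivity)
  have hLβ : Summable fun n : ℕ+ => β ((n : ℕ) : ZMod N) * ((n : ℕ) : ℂ) ^ (-(s - u)) := by
    refine Summable.of_norm ?_
    refine Summable.of_nonneg_of_le (fun n => by positivity) (fun n => ?_)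
      ((aux_summable_rpow hsu).mul_left Cβ)
    rw [norm_mul, Complex.norm_natCast_cpow_of_pos n.pos]
    rw [show (-(s - u)).re = u.re - s.re by rw [neg_re, sub_re]; ring]
    exact mul_le_mul_of_nonneg_right (hCβ _) (by positivity)
  have hmulsum : Summable fun i : ℕ+ × ℕ+ =>
      (α ((i.1 : ℕ) : ZMod N) * ((i.1 : ℕ) : ℂ) ^ (-(s - t))) *
      (β ((i.2 : ℕ) : ZMod N) * ((i.2 : ℕ) : ℂ) ^ (-(s - u))) := by
    refine Summable.of_norm ?_
    have := hLα.norm.mul_of_nonneg hLβ.norm (fun m => norm_nonneg _) (fun n => norm_nonneg _)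
    exact this.congr fun i => (norm_mul _ _).symm
  have hmul := HasSum.mul hLα.hasSum hLβ.hasSum hmulsum
  have HS2 := hmul.mul_left ((2 * π / N : ℂ) ^ (-s) * Complex.Gamma s)
  have hterm : ∀ i : ℕ+ × ℕ+,
      ((2 * π / N : ℂ) ^ (-s) * Complex.Gamma s) *
        ((α ((i.1 : ℕ) : ZMod N) * ((i.1 : ℕ) : ℂ) ^ (-(s - t))) *
         (β ((i.2 : ℕ) : ZMod N) * ((i.2 : ℕ) : ℂ) ^ (-(s - u)))) =
      Complex.Gamma s * a i / ((p i : ℝ) : ℂ) ^ s := by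
    intro i
    have hc : (0 : ℝ) < 2 * π / N := by have := Real.pi_pos; positivity
    have hm0 : (0 : ℝ) < ((i.1 : ℕ) : ℝ) := by exact_mod_cast i.1.pos
    have hn0 : (0 : ℝ) < ((i.2 : ℕ) : ℝ) := by exact_mod_cast i.2.pos
    have hmC : ((i.1 : ℕ) : ℂ) ≠ 0 := by
      simpa using (Nat.cast_ne_zero (R := ℂ)).mpr i.1.pos.ne'
    have hnC : ((i.2 : ℕ) : ℂ) ≠ 0 := by
      simpa using (Nat.cast_ne_zero (R := ℂ)).mpr i.2.pos.ne'
    have hcC : (2 * π / N : ℂ) ≠ 0 := by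
      rw [show (2 * π / N : ℂ) = ((2 * π / N : ℝ) : ℂ) by push_cast; ring]
      exact_mod_cast hc.ne'
    have hsplit : ((p i : ℝ) : ℂ) ^ s =
        (2 * π / N : ℂ) ^ s * ((i.1 : ℕ) : ℂ) ^ s * ((i.2 : ℕ) : ℂ) ^ s := by
      have e1 : ((p i : ℝ) : ℂ) = ((2 * π / N : ℝ) : ℂ) *
          ((((i.1 : ℕ) : ℝ) * ((i.2 : ℕ) : ℝ) : ℝ) : ℂ) := by
        rw [hp_def]; push_cast; ring
      rw [e1, mul_cpow_ofReal_nonneg hc.le (by positivity), Complex.ofReal_mul,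
        mul_cpow_ofReal_nonneg hm0.le hn0.le, ← mul_assoc]
      push_cast
      ring
    rw [hsplit]
    have h1 : ((i.1 : ℕ) : ℂ) ^ s ≠ 0 := by simp [cpow_eq_zero_iff, hmC]
    have h2 : ((i.2 : ℕ) : ℂ) ^ s ≠ 0 := by simp [cpow_eq_zero_iff, hnC]
    have h3 : (2 * π / N : ℂ) ^ s ≠ 0 := by simp [cpow_eq_zero_iff, hcC]
    rw [show -(s - t) = t - s by ring, show -(s - u) = u - s by ring,
      cpow_sub _ _ hmC, cpow_sub _ _ hnC, cpow_neg, ha_def]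
    field_simp
  rw [show (fun i : ℕ+ × ℕ+ =>
      ((2 * π / N : ℂ) ^ (-s) * Complex.Gamma s) *
        ((α ((i.1 : ℕ) : ZMod N) * ((i.1 : ℕ) : ℂ) ^ (-(s - t))) *
         (β ((i.2 : ℕ) : ZMod N) * ((i.2 : ℕ) : ℂ) ^ (-(s - u))))) =
      (fun i : ℕ+ × ℕ+ => Complex.Gamma s * a i / ((p i : ℝ) : ℂ) ^ s) from funext hterm] at HS2
  have hval : mellin F s = (2 * π / N : ℂ) ^ (-s) * Complex.Gamma s *
      ((∑' m : ℕ+, α ((m : ℕ) : ZMod N) * ((m : ℕ) : ℂ) ^ (-(s - t))) *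
       (∑' n : ℕ+, β ((n : ℕ) : ZMod N) * ((n : ℕ) : ℂ) ^ (-(s - u)))) := HS.unique HS2
  -- integrability ingredients
  have hGint : ∀ i : ℕ+ × ℕ+, IntegrableOn
      (fun y : ℝ => (y : ℂ) ^ (s - 1) * (a i * (rexp (-p i * y) : ℝ))) (Set.Ioi 0) := by
    intro i
    have hpi := hppos i
    simp_rw [← mul_assoc, mul_comm _ (a i), mul_assoc]
    have h0 := Complex.GammaIntegral_convergent hs0
    rw [← mul_zero (p i), ← integrableOn_Ioi_comp_mul_left_iff _ _ hpi] at h0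
    refine (IntegrableOn.congr_fun (h0.const_mul (1 / (p i : ℂ) ^ (s - 1)))
      (fun y (hy : 0 < y) => ?_) measurableSet_Ioi).const_mul _
    simp_rw [mul_comm (↑(rexp _) : ℂ), ← mul_assoc, neg_mul, ofReal_mul]
    rw [mul_cpow_ofReal_nonneg hpi.le hy.le, ← mul_assoc, one_div, inv_mul_cancel₀, one_mul]
    rw [Ne, cpow_eq_zero_iff, not_and_or]
    exact Or.inl (ofReal_ne_zero.mpr hpi.ne')
  have hGkey : ∀ i : ℕ+ × ℕ+, ∫ y in Set.Ioi (0 : ℝ),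
      ‖(y : ℂ) ^ (s - 1) * (a i * (rexp (-p i * y) : ℝ))‖ =
      ‖a i‖ * ((1 / p i) ^ s.re * Real.Gamma s.re) := by
    intro i
    rw [← Real.integral_rpow_mul_exp_neg_mul_Ioi hs0 (hppos i), ← integral_const_mul]
    refine setIntegral_congr_fun measurableSet_Ioi (fun y hy => ?_)
    have hy' : 0 < y := hy
    rw [norm_mul, norm_mul, Complex.norm_real, Real.norm_of_nonneg (Real.exp_pos _).le,
      Complex.norm_cpow_eq_rpow_re_of_pos hy', sub_re, one_re,
      show -p i * y = -(p i * y) by ring]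
    ring
  have hGsum : Summable fun i : ℕ+ × ℕ+ => ∫ y in Set.Ioi (0 : ℝ),
      ‖(y : ℂ) ^ (s - 1) * (a i * (rexp (-p i * y) : ℝ))‖ := by
    simp_rw [hGkey]
    have heq : ∀ i : ℕ+ × ℕ+, ‖a i‖ * ((1 / p i) ^ s.re * Real.Gamma s.re) =
        Real.Gamma s.re * (‖a i‖ / p i ^ s.re) := by
      intro i
      rw [one_div, Real.inv_rpow (hppos i).le, div_eq_mul_inv]
      ring
    simp_rw [heq]
    exact h_sum.mul_left _
  -- continuity, hence measurability
  have hFc : ∀ y0 : ℝ, 0 < y0 → ContinuousAt F y0 := by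
    intro y0 hy0
    have hhalf : 0 < y0 / 2 := by linarith
    have hu := S1 (y0 / 2) hhalf
    have hcont2 : ContinuousOn (fun y : ℝ => ∑' i : ℕ+ × ℕ+, a i * (rexp (-p i * y) : ℝ))
        (Set.Ici (y0 / 2)) := by
      refine continuousOn_tsum (fun i => Continuous.continuousOn (by continuity)) hu
        (fun i y hy => ?_)
      rw [norm_mul, Complex.norm_real, Real.norm_of_nonneg (Real.exp_pos _).le]
      refine mul_le_mul_of_nonneg_left (Real.exp_le_exp.mpr ?_) (norm_nonneg _)
      have hyy : y0 / 2 ≤ y := hy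
      nlinarith [(hppos i).le]
    have hEq : Set.EqOn F (fun y : ℝ => ∑' i : ℕ+ × ℕ+, a i * (rexp (-p i * y) : ℝ))
        (Set.Ici (y0 / 2)) := by
      intro y hy
      exact ((hF y (lt_of_lt_of_le hhalf hy)).tsum_eq).symm
    exact (hcont2.congr hEq).continuousAt (Ici_mem_nhds (by linarith))
  have hcont : ContinuousOn (fun y : ℝ => F y * (y : ℂ) ^ (s - 1)) (Set.Ioi 0) := by
    intro y hy
    refine ContinuousAt.continuousWithinAt ?_
    exact (hFc y hy).mul (Complex.continuousAt_ofReal_cpow_const _ _ (Or.inr (ne_of_gt hy)))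
  -- pointwise norm summability
  have hnormsum : ∀ y : ℝ, 0 < y → Summable fun i : ℕ+ × ℕ+ =>
      ‖(y : ℂ) ^ (s - 1) * (a i * (rexp (-p i * y) : ℝ))‖ := by
    intro y hy
    refine ((S1 y hy).mul_left ‖(y : ℂ) ^ (s - 1)‖).congr fun i => ?_
    conv_rhs => rw [norm_mul, norm_mul, Complex.norm_real,
      Real.norm_of_nonneg (Real.exp_pos _).le]
  -- integrability
  have hInt : IntegrableOn (fun y : ℝ => F y * (y : ℂ) ^ (s - 1)) (Set.Ioi 0) := by
    refine ⟨hcont.aestronglyMeasurable measurableSet_Ioi, ?_⟩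
    show ∫⁻ y in Set.Ioi (0 : ℝ), (‖F y * (y : ℂ) ^ (s - 1)‖₊ : ℝ≥0∞) < ⊤
    calc ∫⁻ y in Set.Ioi (0 : ℝ), (‖F y * (y : ℂ) ^ (s - 1)‖₊ : ℝ≥0∞)
        ≤ ∫⁻ y in Set.Ioi (0 : ℝ), ∑' i : ℕ+ × ℕ+,
          (‖(y : ℂ) ^ (s - 1) * (a i * (rexp (-p i * y) : ℝ))‖₊ : ℝ≥0∞) := by
          refine lintegral_mono_ae ?_
          filter_upwards [ae_restrict_mem measurableSet_Ioi] with y hy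
          have hy' : (0 : ℝ) < y := hy
          have h1 : F y * (y : ℂ) ^ (s - 1) =
              ∑' i : ℕ+ × ℕ+, (y : ℂ) ^ (s - 1) * (a i * (rexp (-p i * y) : ℝ)) := by
            rw [← (hF y hy).tsum_eq, ← tsum_mul_right]
            exact tsum_congr fun i => by ring
          rw [h1]
          have hnn : Summable fun i : ℕ+ × ℕ+ =>
              ‖(y : ℂ) ^ (s - 1) * (a i * (rexp (-p i * y) : ℝ))‖₊ := by
            rw [← NNReal.summable_coe]
            exact (hnormsum y hy').congr fun i => rfl
          calc (‖∑' i : ℕ+ × ℕ+, (y : ℂ) ^ (s - 1) * (a i * (rexp (-p i * y) : ℝ))‖₊ : ℝ≥0∞)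
              ≤ ((∑' i : ℕ+ × ℕ+,
                ‖(y : ℂ) ^ (s - 1) * (a i * (rexp (-p i * y) : ℝ))‖₊ : ℝ≥0) : ℝ≥0∞) := by
                exact_mod_cast nnnorm_tsum_le hnn
            _ = _ := ENNReal.coe_tsum hnn
      _ = ∑' i : ℕ+ × ℕ+, ∫⁻ y in Set.Ioi (0 : ℝ),
          (‖(y : ℂ) ^ (s - 1) * (a i * (rexp (-p i * y) : ℝ))‖₊ : ℝ≥0∞) :=
          lintegral_tsum fun i => (hGint i).aestronglyMeasurable.enorm
      _ = ∑' i : ℕ+ × ℕ+, ENNReal.ofReal (∫ y in Set.Ioi (0 : ℝ),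
          ‖(y : ℂ) ^ (s - 1) * (a i * (rexp (-p i * y) : ℝ))‖) := by
          refine tsum_congr fun i => ?_
          have hfi : Integrable (fun y : ℝ =>
              ((‖(y : ℂ) ^ (s - 1) * (a i * (rexp (-p i * y) : ℝ))‖₊ : ℝ)))
              (volume.restrict (Set.Ioi 0)) := by
            simpa only [coe_nnnorm] using (hGint i).norm
          rw [lintegral_coe_eq_integral _ hfi]
          simp only [coe_nnnorm]
      _ < ⊤ := by
          rw [← ENNReal.ofReal_tsum_of_nonneg
            (fun i => integral_nonneg fun y => norm_nonneg _) hGsum]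
          exact ENNReal.ofReal_lt_top
  refine ⟨hInt, ?_⟩
  have hmel : ∫ y in Set.Ioi (0 : ℝ), F y * (y : ℂ) ^ (s - 1) = mellin F s := by
    rw [mellin]
    refine setIntegral_congr_fun measurableSet_Ioi (fun y hy => ?_)
    rw [smul_eq_mul, mul_comm]
  rw [hmel, hval]
  simp only [periodicLSeries]
  ring
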